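/- Let η ∈ D_r with k(η) ≥ 1 and suppose e^{2a(n)} = c n^{−d/k(η)} for a fixed constant c > 0, with b a fixed real. Then the total variation distance between the distributions of X_n(η̊) and X_n(η) under μ_{a(n),b} satisfies d_TV(L(X_n(η̊)), L(X_n(η))) = O(n^{−d/k(η)}). -/

import Mathlib

open scoped ENNReal BigOperators
open Filter

namespace Ising

noncomputable section

/-- The `L_p` norm (`1 ≤ p ≤ ∞`) of an integer vector, via the `PiLp` norm on `ℝ^d`. -/
def lpNorm (p : ℝ≥0∞) [Fact (1 ≤ p)] {d : ℕ} (z : Fin d → ℤ) : ℝ :=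
  ‖(WithLp.equiv p (Fin d → ℝ)).symm (fun i => (z i : ℝ))‖

lemma lpNorm_neg (p : ℝ≥0∞) [Fact (1 ≤ p)] {d : ℕ} (z : Fin d → ℤ) :
    lpNorm p (fun i => -(z i)) = lpNorm p z := by
  unfold lpNorm
  have h : ((WithLp.equiv p (Fin d → ℝ)).symm (fun i => ((-(z i) : ℤ) : ℝ)))
      = -((WithLp.equiv p (Fin d → ℝ)).symm fun i => ((z i : ℤ) : ℝ)) := by
    have : (fun i => ((-(z i) : ℤ) : ℝ)) = -(fun i => ((z i : ℤ) : ℝ)) := by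
      funext i; simp
    rw [this]; rfl
  rw [h, norm_neg]

/-- Vertex set of the `d`-dimensional lattice torus of size `n`:
`{0, …, n-1}^d` with componentwise arithmetic modulo `n`. -/
abbrev Vtx (d n : ℕ) := Fin d → ZMod n

/-- Configurations: a spin (`true` = `+1`, `false` = `-1`) at each vertex. -/
abbrev Conf (d n : ℕ) := Vtx d n → Bool

/-- The spin value (`±1`) of a Boolean. -/
def spin (s : Bool) : ℝ := if s then 1 else -1

/-- The lattice torus `G_n`: distinct vertices `x, y` are adjacent iff `y - x`
(componentwise modulo `n`) admits an integer representative `z` with `‖z‖_p ≤ ρ`. -/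
def torus (d ρ : ℕ) (p : ℝ≥0∞) [Fact (1 ≤ p)] (n : ℕ) : SimpleGraph (Vtx d n) where
  Adj x y := x ≠ y ∧ ∃ z : Fin d → ℤ,
    (∀ i, ((z i : ZMod n) = y i - x i)) ∧ lpNorm p z ≤ (ρ : ℝ)
  symm := by
    constructor
    rintro x y ⟨hxy, z, hz, hn⟩
    refine ⟨hxy.symm, fun i => -(z i), fun i => ?_, by rw [lpNorm_neg]; exact hn⟩
    push_cast
    rw [hz i]; ring
  loopless := ⟨fun x h => h.1 rfl⟩

/-- The corresponding (infinite) lattice graph on `ℤ^d`, used as a reference to define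
local configurations: distinct `x, y` are adjacent iff `‖y - x‖_p ≤ ρ`. -/
def latticeZ (d ρ : ℕ) (p : ℝ≥0∞) [Fact (1 ≤ p)] : SimpleGraph (Fin d → ℤ) where
  Adj x y := x ≠ y ∧ lpNorm p (fun i => y i - x i) ≤ (ρ : ℝ)
  symm := by
    constructor
    rintro x y ⟨hxy, hn⟩
    refine ⟨hxy.symm, ?_⟩
    have h : (fun i => x i - y i) = (fun i => -(y i - x i)) := by funext i; ring
    rw [h, lpNorm_neg]; exact hn
  loopless := ⟨fun x h => h.1 rfl⟩

/-- The ball `B(x,r)` of center `x` and radius `r` for the graph distance. -/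
def gball {V : Type*} (G : SimpleGraph V) (x : V) (r : ℕ) : Set V :=
  {y | G.Reachable x y ∧ G.dist x y ≤ r}

/-- The reference ball `B(0,r)` (in `ℤ^d`). -/
def refBall (d ρ : ℕ) (p : ℝ≥0∞) [Fact (1 ≤ p)] (r : ℕ) : Set (Fin d → ℤ) :=
  gball (latticeZ d ρ p) 0 r

/-- A local configuration of radius `r`: an element of `D_r = {-1,+1}^{B(0,r)}`. -/
abbrev LocalConfig (d ρ : ℕ) (p : ℝ≥0∞) [Fact (1 ≤ p)] (r : ℕ) :=
  ↥(refBall d ρ p r) → Bool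

/-- `k(η)`: the number of positive vertices of a local configuration `η`. -/
def kOf (d ρ : ℕ) (p : ℝ≥0∞) [Fact (1 ≤ p)] (r : ℕ) (η : LocalConfig d ρ p r) : ℕ :=
  Set.ncard {v : ↥(refBall d ρ p r) | η v = true}

/-- The common degree of the vertices (number of neighbors of `0` in the lattice). -/
def degZ (d ρ : ℕ) (p : ℝ≥0∞) [Fact (1 ≤ p)] : ℕ :=
  Set.ncard {z : Fin d → ℤ | (latticeZ d ρ p).Adj 0 z}

/-- The perimeter `γ(η) = V·k(η) - 2·#{edges with both endpoints positive}`; the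
number of ordered adjacent pairs of positive vertices is twice the number of such edges. -/
def perim (d ρ : ℕ) (p : ℝ≥0∞) [Fact (1 ≤ p)] (r : ℕ) (η : LocalConfig d ρ p r) : ℕ :=
  degZ d ρ p * kOf d ρ p r η -
    Set.ncard {q : ↥(refBall d ρ p r) × ↥(refBall d ρ p r) |
      (latticeZ d ρ p).Adj q.1.1 q.2.1 ∧ η q.1 = true ∧ η q.2 = true}

/-- `η` is clean if every vertex at graph distance exactly `r` from `0` is negative. -/
def Clean (d ρ : ℕ) (p : ℝ≥0∞) [Fact (1 ≤ p)] (r : ℕ) (η : LocalConfig d ρ p r) : Prop :=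
  ∀ v : ↥(refBall d ρ p r), (latticeZ d ρ p).dist 0 v.1 = r → η v = false

/-- The translate `η_x` of `η` occurs at `x` in the configuration `σ`. -/
def occursAt (d ρ : ℕ) (p : ℝ≥0∞) [Fact (1 ≤ p)] (r n : ℕ) (η : LocalConfig d ρ p r)
    (x : Vtx d n) (σ : Conf d n) : Prop :=
  ∀ v : ↥(refBall d ρ p r), σ (x + fun i => ((v.1 i : ZMod n))) = η v

/-- The indicator `I_x^η` (as a real number). -/
def occInd (d ρ : ℕ) (p : ℝ≥0∞) [Fact (1 ≤ p)] (r n : ℕ) (η : LocalConfig d ρ p r)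
    (x : Vtx d n) (σ : Conf d n) : ℝ := by
  classical exact if occursAt d ρ p r n η x σ then 1 else 0

/-- `X_n(η) = Σ_x I_x^η`: the number of copies of `η` in `G_n`. -/
def Xcount (d ρ : ℕ) (p : ℝ≥0∞) [Fact (1 ≤ p)] (r n : ℕ) (η : LocalConfig d ρ p r)
    (σ : Conf d n) : ℕ :=
  Set.ncard {x : Vtx d n | occursAt d ρ p r n η x σ}

/-- The interaction term `Σ_{{x,y} ∈ E_n} σ(x)σ(y)`. -/
def pairSum (d ρ : ℕ) (p : ℝ≥0∞) [Fact (1 ≤ p)] (n : ℕ) (σ : Conf d n) : ℝ :=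
  ∑' e : ↥(torus d ρ p n).edgeSet,
    Sym2.lift ⟨fun x y => spin (σ x) * spin (σ y), fun _ _ => mul_comm _ _⟩
      (e : Sym2 (Vtx d n))

/-- The Hamiltonian `a Σ_x σ(x) + b Σ_{{x,y} ∈ E_n} σ(x)σ(y)`. -/
def hamiltonian (d ρ : ℕ) (p : ℝ≥0∞) [Fact (1 ≤ p)] (n : ℕ) (a b : ℝ) (σ : Conf d n) : ℝ :=
  a * (∑' x : Vtx d n, spin (σ x)) + b * pairSum d ρ p n σ

/-- The (unnormalized) Gibbs weight of a configuration. -/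
def weight (d ρ : ℕ) (p : ℝ≥0∞) [Fact (1 ≤ p)] (n : ℕ) (a b : ℝ) (σ : Conf d n) : ℝ :=
  Real.exp (hamiltonian d ρ p n a b σ)

/-- The partition function `Z_{a,b}`. -/
def partZ (d ρ : ℕ) (p : ℝ≥0∞) [Fact (1 ≤ p)] (n : ℕ) (a b : ℝ) : ℝ :=
  ∑' σ : Conf d n, weight d ρ p n a b σ

/-- The Ising (Gibbs) probability `μ_{a,b}(A)` of an event `A ⊆ X_n`. -/
def prob (d ρ : ℕ) (p : ℝ≥0∞) [Fact (1 ≤ p)] (n : ℕ) (a b : ℝ) (A : Set (Conf d n)) : ℝ :=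
  (∑' σ : ↥A, weight d ρ p n a b (σ : Conf d n)) / partZ d ρ p n a b

/-- The expectation `E_{a,b}[f]`. -/
def expect (d ρ : ℕ) (p : ℝ≥0∞) [Fact (1 ≤ p)] (n : ℕ) (a b : ℝ) (f : Conf d n → ℝ) : ℝ :=
  (∑' σ : Conf d n, weight d ρ p n a b σ * f σ) / partZ d ρ p n a b

/-- The variance `Var_{a,b}[f]`. -/
def varE (d ρ : ℕ) (p : ℝ≥0∞) [Fact (1 ≤ p)] (n : ℕ) (a b : ℝ) (f : Conf d n → ℝ) : ℝ :=
  expect d ρ p n a b (fun σ => (f σ - expect d ρ p n a b f) ^ 2)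

/-- The event `{I_x^η = 1}`. -/
def event (d ρ : ℕ) (p : ℝ≥0∞) [Fact (1 ≤ p)] (r n : ℕ) (η : LocalConfig d ρ p r)
    (x : Vtx d n) : Set (Conf d n) :=
  {σ | occursAt d ρ p r n η x σ}

/-- The event that a configuration agrees with `σ₀` on `W`. -/
def agreeOn (d n : ℕ) (W : Set (Vtx d n)) (σ₀ : Conf d n) : Set (Conf d n) :=
  {τ | ∀ x ∈ W, τ x = σ₀ x}

/-- The conditional probability `μ_{a,b}(A | σ₀ on W)`. -/
def condProb (d ρ : ℕ) (p : ℝ≥0∞) [Fact (1 ≤ p)] (n : ℕ) (a b : ℝ) (A : Set (Conf d n))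
    (W : Set (Vtx d n)) (σ₀ : Conf d n) : ℝ :=
  prob d ρ p n a b (A ∩ agreeOn d n W σ₀) / prob d ρ p n a b (agreeOn d n W σ₀)

/-- The exterior boundary `δV` of a set of vertices of the torus. -/
def boundary (d ρ : ℕ) (p : ℝ≥0∞) [Fact (1 ≤ p)] (n : ℕ) (V : Set (Vtx d n)) :
    Set (Vtx d n) :=
  {y | y ∉ V ∧ ∃ x ∈ V, (torus d ρ p n).Adj x y}

/-- The ball `B(x,R)` in the torus. -/
def tball (d ρ : ℕ) (p : ℝ≥0∞) [Fact (1 ≤ p)] (n : ℕ) (x : Vtx d n) (R : ℕ) :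
    Set (Vtx d n) :=
  gball (torus d ρ p n) x R

/-- The distribution (probability mass function on `ℕ`) of an integer-valued observable. -/
def lawOf (d ρ : ℕ) (p : ℝ≥0∞) [Fact (1 ≤ p)] (n : ℕ) (a b : ℝ) (X : Conf d n → ℕ) :
    ℕ → ℝ :=
  fun m => prob d ρ p n a b {σ | X σ = m}

/-- The distribution on `ℕ` of a real-valued (integer-valued in fact) observable. -/
def lawR (d ρ : ℕ) (p : ℝ≥0∞) [Fact (1 ≤ p)] (n : ℕ) (a b : ℝ) (X : Conf d n → ℝ) :
    ℕ → ℝ :=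
  fun m => prob d ρ p n a b {σ | X σ = (m : ℝ)}

/-- The Poisson distribution with parameter `θ`, as a pmf on `ℕ`. -/
def poissonPMF (θ : ℝ) : ℕ → ℝ :=
  fun m => Real.exp (-θ) * θ ^ m / (Nat.factorial m : ℝ)

/-- Total variation distance between two distributions on `ℕ`:
`d_TV(μ,ν) = sup_A |μ(A) - ν(A)|`. -/
def dTV (f g : ℕ → ℝ) : ℝ :=
  ⨆ A : Set ℕ, |(∑' m : ↥A, f (m : ℕ)) - ∑' m : ↥A, g (m : ℕ)|

/-- The clean extension `η̊ ∈ D_{r+1}` of `η ∈ D_r`: it agrees with `η` on `B(0,r)` and is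
negative at every vertex at distance exactly `r+1` from `0`. -/
def ringExt (d ρ : ℕ) (p : ℝ≥0∞) [Fact (1 ≤ p)] (r : ℕ) (η : LocalConfig d ρ p r) :
    LocalConfig d ρ p (r + 1) := by
  classical exact fun v => if h : v.1 ∈ refBall d ρ p r then η ⟨v.1, h⟩ else false

/-- `D_r(η) = {η' ∈ D_r : V_+(η') ⊇ V_+(η)}`. -/
def Dfam (d ρ : ℕ) (p : ℝ≥0∞) [Fact (1 ≤ p)] (r : ℕ) (η : LocalConfig d ρ p r) :
    Set (LocalConfig d ρ p r) :=
  {η' | ∀ v, η v = true → η' v = true}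

/-- `Ī_x^η = Σ_{η' ∈ D_r(η)} I_x^{η'}`. -/
def barInd (d ρ : ℕ) (p : ℝ≥0∞) [Fact (1 ≤ p)] (r n : ℕ) (η : LocalConfig d ρ p r)
    (x : Vtx d n) (σ : Conf d n) : ℝ :=
  ∑' η' : ↥(Dfam d ρ p r η), occInd d ρ p r n (η' : LocalConfig d ρ p r) x σ

/-- `X̄_n(η) = Σ_x Ī_x^η`. -/
def Xbar (d ρ : ℕ) (p : ℝ≥0∞) [Fact (1 ≤ p)] (r n : ℕ) (η : LocalConfig d ρ p r)
    (σ : Conf d n) : ℝ :=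
  ∑' x : Vtx d n, barInd d ρ p r n η x σ

/-- The closed neighbourhood `B̄ = B ∪ δB` of a torus ball. -/
def cball (d ρ : ℕ) (p : ℝ≥0∞) [Fact (1 ≤ p)] (n : ℕ) (x : Vtx d n) (r : ℕ) :
    Set (Vtx d n) :=
  tball d ρ p n x r ∪ boundary d ρ p n (tball d ρ p n x r)

/-- One step of the connectivity relation between the balls of radius `r` centered at the
entries of a tuple: `B̄(x_i) ∩ B(x_j) ≠ ∅`. -/
def stepRel (d ρ : ℕ) (p : ℝ≥0∞) [Fact (1 ≤ p)] (n r : ℕ) {l : ℕ} (x : Fin l → Vtx d n)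
    (i j : Fin l) : Prop :=
  (cball d ρ p n (x i) r ∩ tball d ρ p n (x j) r).Nonempty

/-- The number of equivalence classes, for the connectivity relation, of the set of balls
`{B(x_1,r), …, B(x_l,r)}`. -/
def numClasses (d ρ : ℕ) (p : ℝ≥0∞) [Fact (1 ≤ p)] (n r : ℕ) {l : ℕ}
    (x : Fin l → Vtx d n) : ℕ :=
  Set.ncard (Set.range fun i : Fin l =>
    {j : Fin l | Relation.EqvGen (stepRel d ρ p n r x) i j})

/-- `C_l(s)`: the set of `l`-tuples of vertices whose set of balls of radius `r` is composed
of exactly `s` equivalence classes for the connectivity relation. -/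
def tupleClass (d ρ : ℕ) (p : ℝ≥0∞) [Fact (1 ≤ p)] (n r l s : ℕ) :
    Set (Fin l → Vtx d n) :=
  {x | numClasses d ρ p n r x = s}


/-! ### Auxiliary lemmas for `stmt_4` -/

section AuxGeom

variable {d ρ : ℕ} {p : ℝ≥0∞} [Fact (1 ≤ p)]

lemma abs_coord_le_lpNorm (p : ℝ≥0∞) [hp : Fact (1 ≤ p)] {d : ℕ} (z : Fin d → ℤ)
    (i : Fin d) : |(z i : ℝ)| ≤ lpNorm p z := by
  have h1 : (1 : ℝ≥0∞) ≤ p := hp.out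
  set f : PiLp p (fun _ : Fin d => ℝ) :=
    (WithLp.equiv p (Fin d → ℝ)).symm (fun j => (z j : ℝ)) with hf
  have hnorm : lpNorm p z = ‖f‖ := rfl
  have hfi : ‖f i‖ = |(z i : ℝ)| := by
    rw [Real.norm_eq_abs, hf]; rfl
  rw [hnorm]
  rcases eq_or_ne p ⊤ with rfl | hptop
  · rw [PiLp.norm_eq_ciSup, ← hfi]
    exact le_ciSup (f := fun j => ‖f j‖) (Set.Finite.bddAbove (Set.finite_range _)) i
  · have hq : 0 < p.toReal := ENNReal.toReal_pos
      (fun h0 => by rw [h0] at h1; exact absurd h1 (by simp)) hptop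
    rw [PiLp.norm_eq_sum hq]
    have hle : ‖f i‖ ^ p.toReal ≤ ∑ j, ‖f j‖ ^ p.toReal :=
      Finset.single_le_sum (fun j _ => Real.rpow_nonneg (norm_nonneg _) _)
        (Finset.mem_univ i)
    have h2 : |(z i : ℝ)| = (‖f i‖ ^ p.toReal) ^ (1 / p.toReal) := by
      rw [← Real.rpow_mul (norm_nonneg _), mul_one_div_cancel hq.ne', Real.rpow_one, hfi]
    rw [h2]
    exact Real.rpow_le_rpow (Real.rpow_nonneg (norm_nonneg _) _) hle (by positivity)

lemma adj_coord {u v : Fin d → ℤ} (h : (latticeZ d ρ p).Adj u v) (i : Fin d) :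
    |v i - u i| ≤ (ρ : ℤ) := by
  have h2 := (show u ≠ v ∧ lpNorm p (fun j => v j - u j) ≤ (ρ : ℝ) from h).2
  have h3 : |((v i - u i : ℤ) : ℝ)| ≤ (ρ : ℝ) := by
    have := abs_coord_le_lpNorm p (fun j => v j - u j) i
    calc |((v i - u i : ℤ) : ℝ)| ≤ lpNorm p (fun j => v j - u j) := by exact_mod_cast this
      _ ≤ (ρ : ℝ) := h2
  exact_mod_cast h3

lemma walk_coord {u v : Fin d → ℤ} (w : (latticeZ d ρ p).Walk u v) (i : Fin d) :
    |v i - u i| ≤ (ρ : ℤ) * w.length := by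
  induction w with
  | nil => simp
  | @cons u u' v h q ih =>
    have h1 := adj_coord h i
    have h2 : |v i - u i| ≤ |v i - u' i| + |u' i - u i| := abs_sub_le _ _ _
    rw [SimpleGraph.Walk.length_cons]
    push_cast
    nlinarith [ih, h1, h2]

lemma mem_refBall_coord {r : ℕ} {v : Fin d → ℤ} (hv : v ∈ refBall d ρ p r) (i : Fin d) :
    |v i| ≤ (ρ : ℤ) * r := by
  obtain ⟨hr, hdist⟩ := hv
  obtain ⟨w, hw⟩ := hr.exists_walk_length_eq_dist
  have := walk_coord w i
  rw [hw] at this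
  have h0 : ((0 : Fin d → ℤ) i) = 0 := rfl
  rw [h0, sub_zero] at this
  calc |v i| ≤ (ρ : ℤ) * (latticeZ d ρ p).dist 0 v := this
    _ ≤ (ρ : ℤ) * r := by
        have : ((latticeZ d ρ p).dist 0 v : ℤ) ≤ (r : ℤ) := by exact_mod_cast hdist
        nlinarith [Int.natCast_nonneg ρ]

lemma refBall_finite (d ρ : ℕ) (p : ℝ≥0∞) [Fact (1 ≤ p)] (r : ℕ) :
    (refBall d ρ p r).Finite := by
  apply Set.Finite.subset
    (Set.Finite.pi (fun i : Fin d => Set.finite_Icc (-((ρ : ℤ) * r)) ((ρ : ℤ) * r)))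
  intro v hv
  rw [Set.mem_univ_pi]
  intro i
  exact Set.mem_Icc.mpr (abs_le.mp (mem_refBall_coord hv i))

lemma refBall_mono (d ρ : ℕ) (p : ℝ≥0∞) [Fact (1 ≤ p)] (r : ℕ) :
    refBall d ρ p r ⊆ refBall d ρ p (r + 1) :=
  fun _ hy => ⟨hy.1, hy.2.trans (Nat.le_succ r)⟩

lemma cast_inj_refBall {r n : ℕ} (hn : 2 * ρ * (r + 2) < n) {u u' : Fin d → ℤ}
    (hu : u ∈ refBall d ρ p (r + 1)) (hu' : u' ∈ refBall d ρ p (r + 1))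
    (h : ∀ i, ((u i : ZMod n) = (u' i : ZMod n))) : u = u' := by
  funext i
  have h1 := mem_refBall_coord hu i
  have h2 := mem_refBall_coord hu' i
  have hd : ((u i - u' i : ℤ) : ZMod n) = 0 := by
    push_cast
    rw [h i]; ring
  have hdvd : ((n : ℤ)) ∣ (u i - u' i) := (ZMod.intCast_zmod_eq_zero_iff_dvd _ n).mp hd
  have hn' : (2 * ρ * (r + 2) : ℤ) < (n : ℤ) := by exact_mod_cast hn
  have habs : |u i - u' i| < (n : ℤ) := by
    have h3 : |u i - u' i| ≤ |u i| + |u' i| := abs_sub _ _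
    have hρ0 : (0 : ℤ) ≤ (ρ : ℤ) := Int.natCast_nonneg ρ
    push_cast at h1 h2 hn' ⊢
    nlinarith
  have := Int.eq_zero_of_abs_lt_dvd hdvd habs
  linarith

end AuxGeom

section AuxProb

variable (d ρ : ℕ) (p : ℝ≥0∞) [Fact (1 ≤ p)]

open Classical in
/-- The unnormalized weight of an event, as a finite sum. -/
def sumW (n : ℕ) [NeZero n] (a b : ℝ) (A : Set (Conf d n)) : ℝ :=
  ∑ σ : Conf d n, if σ ∈ A then weight d ρ p n a b σ else 0

lemma partZ_eq (n : ℕ) [NeZero n] (a b : ℝ) :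
    partZ d ρ p n a b = ∑ σ : Conf d n, weight d ρ p n a b σ := tsum_fintype _

lemma partZ_pos (n : ℕ) [NeZero n] (a b : ℝ) : 0 < partZ d ρ p n a b := by
  rw [partZ_eq]
  exact Finset.sum_pos (fun σ _ => Real.exp_pos _) Finset.univ_nonempty

lemma prob_eq_sumW (n : ℕ) [NeZero n] (a b : ℝ) (A : Set (Conf d n)) :
    prob d ρ p n a b A = sumW d ρ p n a b A / partZ d ρ p n a b := by
  classical
  rw [prob, sumW]
  congr 1
  rw [tsum_subtype A (fun σ => weight d ρ p n a b σ), tsum_fintype]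
  exact Finset.sum_congr rfl fun σ _ => by
    rw [Set.indicator_apply]

lemma sumW_nonneg (n : ℕ) [NeZero n] (a b : ℝ) (A : Set (Conf d n)) :
    0 ≤ sumW d ρ p n a b A := by
  classical
  refine Finset.sum_nonneg fun σ _ => ?_
  by_cases h : σ ∈ A
  · rw [if_pos h]; exact (Real.exp_pos _).le
  · rw [if_neg h]

lemma prob_nonneg (n : ℕ) [NeZero n] (a b : ℝ) (A : Set (Conf d n)) :
    0 ≤ prob d ρ p n a b A := by
  rw [prob_eq_sumW]
  exact div_nonneg (sumW_nonneg d ρ p n a b A) (partZ_pos d ρ p n a b).le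

lemma sumW_empty (n : ℕ) [NeZero n] (a b : ℝ) :
    sumW d ρ p n a b (∅ : Set (Conf d n)) = 0 := by
  simp [sumW]

lemma sumW_mono (n : ℕ) [NeZero n] (a b : ℝ) {A B : Set (Conf d n)} (h : A ⊆ B) :
    sumW d ρ p n a b A ≤ sumW d ρ p n a b B := by
  classical
  simp only [sumW]
  refine Finset.sum_le_sum fun σ _ => ?_
  by_cases hσ : σ ∈ A
  · simp only [if_pos hσ, if_pos (h hσ)]
    exact le_rfl
  · simp only [if_neg hσ]
    split_ifs
    exacts [(Real.exp_pos _).le, le_rfl]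

lemma sumW_union_disjoint (n : ℕ) [NeZero n] (a b : ℝ) {A B : Set (Conf d n)}
    (hd : Disjoint A B) :
    sumW d ρ p n a b (A ∪ B) = sumW d ρ p n a b A + sumW d ρ p n a b B := by
  classical
  simp only [sumW, ← Finset.sum_add_distrib]
  refine Finset.sum_congr rfl fun σ _ => ?_
  by_cases h1 : σ ∈ A
  · have h2 : σ ∉ B := fun h2 => Set.disjoint_left.mp hd h1 h2
    simp [Set.mem_union, h1, h2]
  · by_cases h2 : σ ∈ B <;> simp [Set.mem_union, h1, h2]

lemma sumW_union_le (n : ℕ) [NeZero n] (a b : ℝ) (A B : Set (Conf d n)) :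
    sumW d ρ p n a b (A ∪ B) ≤ sumW d ρ p n a b A + sumW d ρ p n a b B := by
  classical
  simp only [sumW, ← Finset.sum_add_distrib]
  refine Finset.sum_le_sum fun σ _ => ?_
  have hw : 0 ≤ weight d ρ p n a b σ := (Real.exp_pos _).le
  by_cases h1 : σ ∈ A <;> by_cases h2 : σ ∈ B <;>
    simp [Set.mem_union, h1, h2, hw]

lemma sumW_biUnion_le {ι : Type*} [DecidableEq ι] (n : ℕ) [NeZero n] (a b : ℝ)
    (I : Finset ι) (E : ι → Set (Conf d n)) :
    sumW d ρ p n a b (⋃ i ∈ I, E i) ≤ ∑ i ∈ I, sumW d ρ p n a b (E i) := by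
  classical
  induction I using Finset.induction_on with
  | empty => simp [sumW_empty]
  | @insert i I hiI ih =>
    rw [Finset.sum_insert hiI, Finset.set_biUnion_insert]
    exact le_trans (sumW_union_le d ρ p n a b _ _) (add_le_add le_rfl ih)

/-- Setting a configuration to `false` on a finite set of sites. -/
def setFalse {d n : ℕ} (T : Finset (Vtx d n)) (σ : Conf d n) : Conf d n :=
  fun y => if y ∈ T then false else σ y

lemma setFalse_empty {n : ℕ} (σ : Conf d n) : setFalse (∅ : Finset (Vtx d n)) σ = σ := by
  funext z; simp [setFalse]

lemma setFalse_insert {n : ℕ} (T : Finset (Vtx d n)) (y : Vtx d n) (σ : Conf d n) :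
    setFalse (insert y T) σ = setFalse T (Function.update σ y false) := by
  classical
  funext z
  by_cases hzT : z ∈ T
  · simp [setFalse, hzT]
  · by_cases hzy : z = y
    · subst hzy; simp [setFalse, hzT]
    · simp [setFalse, hzT, hzy, Function.update_of_ne hzy]

lemma spin_abs (s : Bool) : |spin s| = 1 := by cases s <;> simp [spin]

lemma pairSum_update_bound (n : ℕ) [NeZero n] (σ : Conf d n) (y : Vtx d n) :
    |pairSum d ρ p n σ - pairSum d ρ p n (Function.update σ y false)|
      ≤ 2 * (((2 * ρ + 1) ^ d : ℕ) : ℝ) := by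
  classical
  haveI : Fintype ↥(torus d ρ p n).edgeSet := Fintype.ofFinite _
  set σ' := Function.update σ y false with hσ'
  rw [pairSum, pairSum, tsum_fintype, tsum_fintype, ← Finset.sum_sub_distrib]
  refine le_trans (Finset.abs_sum_le_sum_abs _ _) ?_
  set t : Conf d n → Sym2 (Vtx d n) → ℝ := fun τ e =>
    Sym2.lift ⟨fun x₁ x₂ => spin (τ x₁) * spin (τ x₂), fun _ _ => mul_comm _ _⟩ e with ht
  have hterm : ∀ e : ↥(torus d ρ p n).edgeSet,
      |t σ (e : Sym2 (Vtx d n)) - t σ' (e : Sym2 (Vtx d n))|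
        ≤ if y ∈ (e : Sym2 (Vtx d n)) then 2 else 0 := by
    rintro ⟨e, he⟩
    show |t σ e - t σ' e| ≤ if y ∈ e then 2 else 0
    clear he
    induction e using Sym2.ind with
    | _ x₁ x₂ =>
      rw [ht]
      simp only [Sym2.lift_mk]
      by_cases hy : y ∈ s(x₁, x₂)
      · rw [if_pos hy]
        have hA : |spin (σ x₁) * spin (σ x₂)| = 1 := by
          rw [abs_mul, spin_abs, spin_abs, mul_one]
        have hB : |spin (σ' x₁) * spin (σ' x₂)| = 1 := by
          rw [abs_mul, spin_abs, spin_abs, mul_one]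
        calc |spin (σ x₁) * spin (σ x₂) - spin (σ' x₁) * spin (σ' x₂)|
            ≤ |spin (σ x₁) * spin (σ x₂)| + |spin (σ' x₁) * spin (σ' x₂)| := abs_sub _ _
          _ ≤ 2 := by rw [hA, hB]; norm_num
      · rw [if_neg hy]
        rw [Sym2.mem_iff] at hy
        push_neg at hy
        rw [hσ']
        rw [Function.update_of_ne (Ne.symm hy.1), Function.update_of_ne (Ne.symm hy.2)]
        simp
  refine le_trans (Finset.sum_le_sum fun e _ => hterm e) ?_
  rw [← Finset.sum_filter, Finset.sum_const, nsmul_eq_mul]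
  have hcard : (Finset.univ.filter fun e : ↥(torus d ρ p n).edgeSet =>
      y ∈ (e : Sym2 (Vtx d n))).card ≤ (2 * ρ + 1) ^ d := by
    set box : Finset (Fin d → ℤ) :=
      Fintype.piFinset (fun _ : Fin d => Finset.Icc (-(ρ : ℤ)) (ρ : ℤ)) with hbox
    set nb : Finset (Vtx d n) := box.image (fun w => y + fun i => ((w i : ZMod n))) with hnb
    have h1 : (Finset.univ.filter fun e : ↥(torus d ρ p n).edgeSet =>
        y ∈ (e : Sym2 (Vtx d n))).card ≤ nb.card := by
      refine Finset.card_le_card_of_injOn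
        (fun e => if h : y ∈ (e : Sym2 (Vtx d n)) then Sym2.Mem.other' h else y) ?_ ?_
      · intro e hee
        have hy : y ∈ (e : Sym2 (Vtx d n)) := (Finset.mem_filter.mp hee).2
        dsimp only
        rw [dif_pos hy]
        have hadj : (torus d ρ p n).Adj y (Sym2.Mem.other' hy) := by
          have hsp := Sym2.other_spec' hy
          have he2 := e.2
          rw [← hsp] at he2
          exact (SimpleGraph.mem_edgeSet _).mp he2
        obtain ⟨hne, wv, hw, hnorm⟩ := (show y ≠ Sym2.Mem.other' hy ∧ ∃ z : Fin d → ℤ,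
          (∀ i, ((z i : ZMod n) = (Sym2.Mem.other' hy) i - y i)) ∧ lpNorm p z ≤ (ρ : ℝ) from hadj)
        refine Finset.mem_image.mpr ⟨wv, ?_, ?_⟩
        · refine Fintype.mem_piFinset.mpr fun i => Finset.mem_Icc.mpr (abs_le.mp ?_)
          have h3 : |((wv i : ℤ) : ℝ)| ≤ (ρ : ℝ) :=
            le_trans (abs_coord_le_lpNorm p wv i) hnorm
          exact_mod_cast h3
        · funext i
          show y i + ((wv i : ZMod n)) = _
          rw [hw i]; ring
      · intro e₁ h₁ e₂ h₂ hf
        have hy₁ : y ∈ (e₁ : Sym2 (Vtx d n)) :=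
          (Finset.mem_filter.mp (Finset.mem_coe.mp h₁)).2
        have hy₂ : y ∈ (e₂ : Sym2 (Vtx d n)) :=
          (Finset.mem_filter.mp (Finset.mem_coe.mp h₂)).2
        dsimp only at hf
        rw [dif_pos hy₁, dif_pos hy₂] at hf
        apply Subtype.ext
        rw [← Sym2.other_spec' hy₁, ← Sym2.other_spec' hy₂, hf]
    have h2 : nb.card ≤ (2 * ρ + 1) ^ d := by
      refine le_trans Finset.card_image_le ?_
      rw [hbox, Fintype.card_piFinset]
      have hIcc : (Finset.Icc (-(ρ : ℤ)) (ρ : ℤ)).card = 2 * ρ + 1 := by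
        rw [Int.card_Icc]
        have : ((ρ : ℤ) + 1 - -(ρ : ℤ)) = ((2 * ρ + 1 : ℕ) : ℤ) := by push_cast; ring
        rw [this, Int.toNat_natCast]
      simp [hIcc]
    exact le_trans h1 h2
  have : ((Finset.univ.filter fun e : ↥(torus d ρ p n).edgeSet =>
      y ∈ (e : Sym2 (Vtx d n))).card : ℝ) ≤ (((2 * ρ + 1) ^ d : ℕ) : ℝ) := by
    exact_mod_cast hcard
  linarith

lemma weight_update_le (n : ℕ) [NeZero n] (a b : ℝ) (σ : Conf d n) (y : Vtx d n)
    (hy : σ y = true) :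
    weight d ρ p n a b σ
      ≤ Real.exp (2 * a + 2 * |b| * (((2 * ρ + 1) ^ d : ℕ) : ℝ)) *
        weight d ρ p n a b (Function.update σ y false) := by
  classical
  set σ' := Function.update σ y false with hσ'
  rw [weight, weight, ← Real.exp_add]
  apply Real.exp_le_exp.mpr
  rw [hamiltonian, hamiltonian]
  have hspin : (∑' x : Vtx d n, spin (σ x)) = (∑' x : Vtx d n, spin (σ' x)) + 2 := by
    rw [tsum_fintype, tsum_fintype]
    have hsub : ∑ x : Vtx d n, spin (σ x) - ∑ x : Vtx d n, spin (σ' x)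
        = ∑ x : Vtx d n, (spin (σ x) - spin (σ' x)) := (Finset.sum_sub_distrib _ _).symm
    have hval : ∑ x : Vtx d n, (spin (σ x) - spin (σ' x)) = 2 := by
      rw [Finset.sum_eq_single_of_mem y (Finset.mem_univ y)
        (fun x _ hxy => by rw [hσ', Function.update_of_ne hxy]; ring)]
      rw [hσ', Function.update_self, hy]
      norm_num [spin]
    linarith [hsub, hval]
  have hpair := pairSum_update_bound d ρ p n σ y
  rw [← hσ'] at hpair
  have h1 : b * pairSum d ρ p n σ
      ≤ b * pairSum d ρ p n σ' + |b| * (2 * (((2 * ρ + 1) ^ d : ℕ) : ℝ)) := by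
    have habs : |b * (pairSum d ρ p n σ - pairSum d ρ p n σ')|
        ≤ |b| * (2 * (((2 * ρ + 1) ^ d : ℕ) : ℝ)) := by
      rw [abs_mul]
      exact mul_le_mul_of_nonneg_left hpair (abs_nonneg b)
    have h2 := (le_abs_self _).trans habs
    nlinarith
  rw [hspin]
  nlinarith

lemma weight_setFalse_le (n : ℕ) [NeZero n] (a b : ℝ) (T : Finset (Vtx d n))
    (σ : Conf d n) (hT : ∀ y ∈ T, σ y = true) :
    weight d ρ p n a b σ
      ≤ Real.exp ((2 * a + 2 * |b| * (((2 * ρ + 1) ^ d : ℕ) : ℝ)) * T.card) *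
        weight d ρ p n a b (setFalse T σ) := by
  classical
  induction T using Finset.induction_on generalizing σ with
  | empty => rw [setFalse_empty]; simp
  | @insert y T hyT ih =>
    have hy : σ y = true := hT y (Finset.mem_insert_self y T)
    have step1 := weight_update_le d ρ p n a b σ y hy
    set σ₁ := Function.update σ y false with hσ₁
    have hT1 : ∀ z ∈ T, σ₁ z = true := fun z hz => by
      rw [hσ₁, Function.update_of_ne (fun h : z = y => hyT (by rwa [h] at hz))]
      exact hT z (Finset.mem_insert_of_mem hz)
    have step2 := ih σ₁ hT1
    rw [setFalse_insert, ← hσ₁]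
    calc weight d ρ p n a b σ
        ≤ Real.exp (2 * a + 2 * |b| * (((2 * ρ + 1) ^ d : ℕ) : ℝ)) *
          weight d ρ p n a b σ₁ := step1
      _ ≤ Real.exp (2 * a + 2 * |b| * (((2 * ρ + 1) ^ d : ℕ) : ℝ)) *
          (Real.exp ((2 * a + 2 * |b| * (((2 * ρ + 1) ^ d : ℕ) : ℝ)) * T.card) *
            weight d ρ p n a b (setFalse T σ₁)) :=
          mul_le_mul_of_nonneg_left step2 (Real.exp_pos _).le
      _ = Real.exp ((2 * a + 2 * |b| * (((2 * ρ + 1) ^ d : ℕ) : ℝ)) *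
            (insert y T).card) * weight d ρ p n a b (setFalse T σ₁) := by
          rw [← mul_assoc, ← Real.exp_add, Finset.card_insert_of_notMem hyT]
          push_cast
          ring_nf

end AuxProb

section AuxMain

variable {d ρ r : ℕ} {p : ℝ≥0∞} [Fact (1 ≤ p)]

lemma occurs_of_ringExt {n : ℕ} (η : LocalConfig d ρ p r) (x : Vtx d n) (σ : Conf d n)
    (h : occursAt d ρ p (r + 1) n (ringExt d ρ p r η) x σ) :
    occursAt d ρ p r n η x σ := by
  intro v
  have hv' : v.1 ∈ refBall d ρ p (r + 1) := refBall_mono d ρ p r v.2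
  have h1 := h ⟨v.1, hv'⟩
  rw [h1]
  show ringExt d ρ p r η ⟨v.1, hv'⟩ = η v
  unfold ringExt
  rw [dif_pos v.2]

lemma flip_bound (η : LocalConfig d ρ p r) (n : ℕ) (hn : 2 * ρ * (r + 2) < n)
    (a b : ℝ) (x : Vtx d n) (v : Fin d → ℤ)
    (hv1 : v ∈ refBall d ρ p (r + 1)) (hv2 : v ∉ refBall d ρ p r) :
    prob d ρ p n a b
        {σ | occursAt d ρ p r n η x σ ∧ σ (x + fun i => ((v i : ZMod n))) = true}
      ≤ Real.exp ((2 * a + 2 * |b| * (((2 * ρ + 1) ^ d : ℕ) : ℝ)) *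
          ((kOf d ρ p r η + 1 : ℕ) : ℝ)) := by
  classical
  have hn0 : 0 < n := lt_of_le_of_lt (Nat.zero_le _) hn
  haveI : NeZero n := ⟨hn0.ne'⟩
  set F : Set (Conf d n) :=
    {σ | occursAt d ρ p r n η x σ ∧ σ (x + fun i => ((v i : ZMod n))) = true} with hF
  -- the finset of positive sites of `η`, as integer points
  haveI := (refBall_finite d ρ p r).to_subtype
  have hPSfin : ({u : ↥(refBall d ρ p r) | η u = true}).Finite := Set.toFinite _
  set Pfin : Finset (Fin d → ℤ) := hPSfin.toFinset.image Subtype.val with hPfin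
  have hPcard : Pfin.card = kOf d ρ p r η := by
    rw [hPfin, Finset.card_image_of_injective _ Subtype.val_injective, kOf,
      Set.ncard_eq_toFinset_card _ hPSfin]
  have hPsub : ∀ y ∈ Pfin, y ∈ refBall d ρ p r := by
    intro y hy
    obtain ⟨u₀, _, rfl⟩ := Finset.mem_image.mp hy
    exact u₀.2
  have hvP : v ∉ Pfin := fun h => hv2 (hPsub v h)
  set Sfin : Finset (Fin d → ℤ) := insert v Pfin with hSfin
  have hScard : Sfin.card = kOf d ρ p r η + 1 := by
    rw [hSfin, Finset.card_insert_of_notMem hvP, hPcard]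
  have hSsub : ∀ y ∈ Sfin, y ∈ refBall d ρ p (r + 1) := by
    intro y hy
    rcases Finset.mem_insert.mp hy with rfl | hyP
    · exact hv1
    · exact refBall_mono d ρ p r (hPsub y hyP)
  set φ : (Fin d → ℤ) → Vtx d n := fun u => x + fun i => ((u i : ZMod n)) with hφ
  have hφinj : Set.InjOn φ ↑Sfin := by
    intro u hu u' hu' hφeq
    refine cast_inj_refBall hn (hSsub u (Finset.mem_coe.mp hu))
      (hSsub u' (Finset.mem_coe.mp hu')) fun i => ?_
    have := congrFun hφeq i
    simp only [hφ] at this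
    exact add_left_cancel this
  set T : Finset (Vtx d n) := Sfin.image φ with hT
  have hTcard : T.card = kOf d ρ p r η + 1 := by
    rw [hT, Finset.card_image_of_injOn hφinj, hScard]
  have hTrue : ∀ σ ∈ F, ∀ y ∈ T, σ y = true := by
    intro σ hσ y hy
    obtain ⟨hocc, htrue⟩ := hσ
    obtain ⟨u, hu, rfl⟩ := Finset.mem_image.mp hy
    rcases Finset.mem_insert.mp hu with rfl | huP
    · exact htrue
    · obtain ⟨u₀, hu₀, rfl⟩ := Finset.mem_image.mp huP
      have h1 := hocc u₀
      rw [h1]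
      have h2 : u₀ ∈ {u : ↥(refBall d ρ p r) | η u = true} := hPSfin.mem_toFinset.mp hu₀
      exact h2
  set Φ : Conf d n → Conf d n := setFalse T with hΦ
  have hΦagree : ∀ σ y, y ∉ T → Φ σ y = σ y := by
    intro σ y hy
    simp [hΦ, setFalse, hy]
  have hΦfalse : ∀ σ y, y ∈ T → Φ σ y = false := by
    intro σ y hy
    simp [hΦ, setFalse, hy]
  have hΦinj : ∀ σ ∈ F, ∀ σ' ∈ F, Φ σ = Φ σ' → σ = σ' := by
    intro σ hσ σ' hσ' heq
    funext y
    by_cases hy : y ∈ T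
    · rw [hTrue σ hσ y hy, hTrue σ' hσ' y hy]
    · rw [← hΦagree σ y hy, ← hΦagree σ' y hy, heq]
  set K : ℝ := Real.exp ((2 * a + 2 * |b| * (((2 * ρ + 1) ^ d : ℕ) : ℝ)) *
    ((kOf d ρ p r η + 1 : ℕ) : ℝ)) with hK
  have hWb : ∀ σ ∈ F, weight d ρ p n a b σ ≤ K * weight d ρ p n a b (Φ σ) := by
    intro σ hσ
    have := weight_setFalse_le d ρ p n a b T σ (hTrue σ hσ)
    rwa [hTcard] at this
  rw [prob_eq_sumW, div_le_iff₀ (partZ_pos d ρ p n a b), sumW]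
  refine le_trans (Finset.sum_le_sum
    (g := fun σ => if σ ∈ F then K * weight d ρ p n a b (Φ σ) else 0) fun σ _ => ?_) ?_
  · split_ifs with hσ
    · exact hWb σ hσ
    · exact le_rfl
  · have h4 : ∑ σ : Conf d n, (if σ ∈ F then K * weight d ρ p n a b (Φ σ) else 0)
        = K * ∑ σ : Conf d n, (if σ ∈ F then weight d ρ p n a b (Φ σ) else 0) := by
      rw [Finset.mul_sum]
      refine Finset.sum_congr rfl fun σ _ => ?_
      split_ifs with hσ
      · rfl
      · rw [mul_zero]
    rw [h4]
    refine mul_le_mul_of_nonneg_left ?_ (Real.exp_pos _).le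
    have h6 : ∑ σ : Conf d n, (if σ ∈ F then weight d ρ p n a b (Φ σ) else 0)
        = ∑ σ ∈ Finset.univ.filter (· ∈ F), weight d ρ p n a b (Φ σ) :=
      (Finset.sum_filter _ _).symm
    have h5 : ∑ σ ∈ Finset.univ.filter (· ∈ F), weight d ρ p n a b (Φ σ)
        = ∑ τ ∈ (Finset.univ.filter (· ∈ F)).image Φ, weight d ρ p n a b τ :=
      (Finset.sum_image (fun σ hσ σ' hσ' heq =>
        hΦinj σ (Finset.mem_filter.mp hσ).2 σ' (Finset.mem_filter.mp hσ').2 heq)).symm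
    rw [h6, h5, partZ_eq]
    exact Finset.sum_le_sum_of_subset_of_nonneg (Finset.subset_univ _)
      fun τ _ _ => (Real.exp_pos _).le

lemma dTV_le_prob_ne (d ρ : ℕ) (p : ℝ≥0∞) [Fact (1 ≤ p)] (n : ℕ) [NeZero n] (a b : ℝ)
    (X Y : Conf d n → ℕ) :
    dTV (lawOf d ρ p n a b X) (lawOf d ρ p n a b Y)
      ≤ prob d ρ p n a b {σ | X σ ≠ Y σ} := by
  classical
  set N : Set (Conf d n) := {σ | X σ ≠ Y σ} with hN
  have hZ : 0 < partZ d ρ p n a b := partZ_pos d ρ p n a b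
  set u : ℕ → ℝ := fun m => prob d ρ p n a b ({σ | X σ = m} ∩ N) with hu_def
  set v : ℕ → ℝ := fun m => prob d ρ p n a b ({σ | Y σ = m} ∩ N) with hv_def
  set w : ℕ → ℝ := fun m => prob d ρ p n a b ({σ | X σ = m} ∩ Nᶜ) with hw_def
  have hsplit : ∀ (W : Conf d n → ℕ) (m : ℕ), lawOf d ρ p n a b W m
      = prob d ρ p n a b ({σ | W σ = m} ∩ N) + prob d ρ p n a b ({σ | W σ = m} ∩ Nᶜ) := by
    intro W m
    rw [lawOf, prob_eq_sumW, prob_eq_sumW, prob_eq_sumW, ← add_div]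
    congr 1
    rw [sumW, sumW, sumW, ← Finset.sum_add_distrib]
    refine Finset.sum_congr rfl fun σ _ => ?_
    by_cases h1 : σ ∈ N <;> by_cases h2 : W σ = m <;>
      simp [Set.mem_inter_iff, Set.mem_setOf_eq, h1, h2]
  have hcompl : ∀ m : ℕ, ({σ : Conf d n | Y σ = m} ∩ Nᶜ) = ({σ : Conf d n | X σ = m} ∩ Nᶜ) := by
    intro m
    ext σ
    simp only [Set.mem_inter_iff, Set.mem_setOf_eq, Set.mem_compl_iff, hN, not_not]
    constructor <;> rintro ⟨h1, h2⟩ <;> constructor <;> simp_all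
  have hsplitY : ∀ m : ℕ, lawOf d ρ p n a b Y m = v m + w m := by
    intro m
    rw [hsplit Y m, hcompl m]
  have hu0 : ∀ m, 0 ≤ u m := fun m => prob_nonneg d ρ p n a b _
  have hv0 : ∀ m, 0 ≤ v m := fun m => prob_nonneg d ρ p n a b _
  have hw0 : ∀ m, 0 ≤ w m := fun m => prob_nonneg d ρ p n a b _
  set R : Finset ℕ := Finset.image X Finset.univ ∪ Finset.image Y Finset.univ with hR
  have hsupp : ∀ (W : Conf d n → ℕ) (B : Set (Conf d n)) (m : ℕ),
      (∀ σ, σ ∈ B → W σ = m) → m ∉ Finset.image W Finset.univ →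
      prob d ρ p n a b B = 0 := by
    intro W B m hBm hm
    rw [prob_eq_sumW, sumW]
    have : ∀ σ ∈ (Finset.univ : Finset (Conf d n)),
        (if σ ∈ B then weight d ρ p n a b σ else 0) = 0 := by
      intro σ _
      rw [if_neg]
      intro hmem
      exact hm (Finset.mem_image.mpr ⟨σ, Finset.mem_univ σ, hBm σ hmem⟩)
    rw [Finset.sum_eq_zero this, zero_div]
  have hus : ∀ m ∉ R, u m = 0 := fun m hm =>
    hsupp X _ m (fun σ h => h.1) (fun h => hm (Finset.mem_union_left _ h))
  have hvs : ∀ m ∉ R, v m = 0 := fun m hm =>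
    hsupp Y _ m (fun σ h => h.1) (fun h => hm (Finset.mem_union_right _ h))
  have hws : ∀ m ∉ R, w m = 0 := fun m hm =>
    hsupp X _ m (fun σ h => h.1) (fun h => hm (Finset.mem_union_left _ h))
  have hu_sum : Summable u := summable_of_ne_finset_zero hus
  have hv_sum : Summable v := summable_of_ne_finset_zero hvs
  have hw_sum : Summable w := summable_of_ne_finset_zero hws
  rw [dTV]
  refine Real.iSup_le (fun A => ?_) (prob_nonneg d ρ p n a b N)
  have hu_s : Summable (fun m : ↥A => u ↑m) := hu_sum.subtype A
  have hv_s : Summable (fun m : ↥A => v ↑m) := hv_sum.subtype A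
  have hw_s : Summable (fun m : ↥A => w ↑m) := hw_sum.subtype A
  have hXsum : ∑' (m : ↥A), lawOf d ρ p n a b X ↑m
      = (∑' (m : ↥A), u ↑m) + (∑' (m : ↥A), w ↑m) := by
    rw [← Summable.tsum_add hu_s hw_s]
    exact tsum_congr fun m => hsplit X ↑m
  have hYsum : ∑' (m : ↥A), lawOf d ρ p n a b Y ↑m
      = (∑' (m : ↥A), v ↑m) + (∑' (m : ↥A), w ↑m) := by
    rw [← Summable.tsum_add hv_s hw_s]
    exact tsum_congr fun m => hsplitY ↑m
  have key : ∀ (W : Conf d n → ℕ) (g : ℕ → ℝ), Summable g →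
      (∀ m, g m = prob d ρ p n a b ({σ | W σ = m} ∩ N)) →
      ∑' (m : ↥A), g ↑m ≤ prob d ρ p n a b N := by
    intro W g hg hgdef
    have hg_s : Summable (fun m : ↥A => g ↑m) := hg.subtype A
    refine Summable.tsum_le_of_sum_le hg_s fun s => ?_
    have h1 : ∑ m ∈ s, g ↑m
        = (∑ m ∈ s, sumW d ρ p n a b ({σ | W σ = ↑m} ∩ N)) / partZ d ρ p n a b := by
      rw [Finset.sum_div]
      exact Finset.sum_congr rfl fun m _ => by rw [hgdef ↑m, prob_eq_sumW]
    rw [h1, prob_eq_sumW]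
    gcongr
    have hEq : ∀ t : Finset ↥A, ∑ m ∈ t, sumW d ρ p n a b ({σ | W σ = ↑m} ∩ N)
        = sumW d ρ p n a b (⋃ m ∈ t, ({σ : Conf d n | W σ = ↑m} ∩ N)) := by
      intro t
      induction t using Finset.induction_on with
      | empty => simp [sumW_empty]
      | @insert m t hmt ih =>
        rw [Finset.sum_insert hmt, ih, Finset.set_biUnion_insert]
        have hdisj : Disjoint ({σ : Conf d n | W σ = ↑m} ∩ N)
            (⋃ m' ∈ t, ({σ : Conf d n | W σ = ↑m'} ∩ N)) := by
          rw [Set.disjoint_left]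
          rintro σ ⟨hWσ, -⟩ hin
          simp only [Set.mem_iUnion, Set.mem_inter_iff, Set.mem_setOf_eq] at hin
          obtain ⟨m', hm't, hWσ', -⟩ := hin
          apply hmt
          have hmm : m = m' := Subtype.val_injective (by rw [← hWσ, hWσ'])
          rwa [hmm]
        exact (sumW_union_disjoint d ρ p n a b hdisj).symm
    rw [hEq s]
    exact sumW_mono d ρ p n a b (Set.iUnion₂_subset fun m _ => Set.inter_subset_right)
  have hU : ∑' (m : ↥A), u ↑m ≤ prob d ρ p n a b N := key X u hu_sum fun m => rfl
  have hV : ∑' (m : ↥A), v ↑m ≤ prob d ρ p n a b N := key Y v hv_sum fun m => rfl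
  have hU0 : 0 ≤ ∑' (m : ↥A), u ↑m := tsum_nonneg fun m => hu0 ↑m
  have hV0 : 0 ≤ ∑' (m : ↥A), v ↑m := tsum_nonneg fun m => hv0 ↑m
  rw [hXsum, hYsum]
  have : (∑' (m : ↥A), u ↑m) + (∑' (m : ↥A), w ↑m)
      - ((∑' (m : ↥A), v ↑m) + (∑' (m : ↥A), w ↑m))
      = (∑' (m : ↥A), u ↑m) - (∑' (m : ↥A), v ↑m) := by ring
  rw [this]
  rw [abs_le]
  constructor <;> linarith

end AuxMain

/-- **Lemma (reduction to clean configurations, total variation part).**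
If `e^{2a(n)} = c n^{-d/k(η)}` then `d_TV(L(X_n(η̊)), L(X_n(η))) = O(n^{-d/k(η)})`. -/
theorem stmt_4
    (d ρ r : ℕ) (hd : 1 ≤ d) (hρ : 1 ≤ ρ) (p : ℝ≥0∞) [Fact (1 ≤ p)]
    (η : LocalConfig d ρ p r) (hk : 1 ≤ kOf d ρ p r η)
    (c : ℝ) (hc : 0 < c) (b : ℝ) (a : ℕ → ℝ)
    (ha : ∀ n : ℕ, 0 < n →
      Real.exp (2 * a n) = c * (n : ℝ) ^ (-(d : ℝ) / (kOf d ρ p r η : ℝ))) :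
    ∃ C : ℝ, 0 < C ∧ ∀ n : ℕ, 2 * ρ * (r + 2) < n →
      dTV (lawOf d ρ p n (a n) b (Xcount d ρ p (r + 1) n (ringExt d ρ p r η)))
          (lawOf d ρ p n (a n) b (Xcount d ρ p r n η))
        ≤ C * (n : ℝ) ^ (-(d : ℝ) / (kOf d ρ p r η : ℝ)) := by
  classical
  set k : ℕ := kOf d ρ p r η with hkdef
  have hkR : (1 : ℝ) ≤ (k : ℝ) := by exact_mod_cast hk
  set Q : ℝ := 2 * |b| * (((2 * ρ + 1) ^ d : ℕ) : ℝ) with hQ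
  set Kb : ℝ := Real.exp (Q * ((k + 1 : ℕ) : ℝ)) with hKb
  have hAnnfin : (refBall d ρ p (r + 1) \ refBall d ρ p r).Finite :=
    (refBall_finite d ρ p (r + 1)).subset Set.diff_subset
  set Ann : Finset (Fin d → ℤ) := hAnnfin.toFinset with hAnnDef
  set C : ℝ := (Ann.card : ℝ) * Kb * c ^ (k + 1) + 1 with hC
  have hKb0 : 0 < Kb := Real.exp_pos _
  have hC0 : 0 < C := by
    have h1 : 0 ≤ (Ann.card : ℝ) * Kb * c ^ (k + 1) :=
      mul_nonneg (mul_nonneg (Nat.cast_nonneg _) hKb0.le) (pow_pos hc _).le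
    rw [hC]; linarith
  refine ⟨C, hC0, fun n hn => ?_⟩
  have hn0 : 0 < n := lt_of_le_of_lt (Nat.zero_le _) hn
  have hnR : (0 : ℝ) < (n : ℝ) := by exact_mod_cast hn0
  haveI : NeZero n := ⟨hn0.ne'⟩
  set e : ℝ := -(d : ℝ) / (k : ℝ) with he
  set X : Conf d n → ℕ := Xcount d ρ p (r + 1) n (ringExt d ρ p r η) with hX
  set Y : Conf d n → ℕ := Xcount d ρ p r n η with hY
  set N : Set (Conf d n) := {σ | X σ ≠ Y σ} with hN
  have step1 : dTV (lawOf d ρ p n (a n) b X) (lawOf d ρ p n (a n) b Y)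
      ≤ prob d ρ p n (a n) b N := dTV_le_prob_ne d ρ p n (a n) b X Y
  set F : Vtx d n × (Fin d → ℤ) → Set (Conf d n) := fun q =>
    {σ | occursAt d ρ p r n η q.1 σ ∧ σ (q.1 + fun i => ((q.2 i : ZMod n))) = true}
    with hFdef
  set I : Finset (Vtx d n × (Fin d → ℤ)) := Finset.univ ×ˢ Ann with hI
  have hcov : N ⊆ ⋃ q ∈ I, F q := by
    intro σ hσ
    have hσ' : X σ ≠ Y σ := hσ
    have hsub : {x : Vtx d n | occursAt d ρ p (r + 1) n (ringExt d ρ p r η) x σ}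
        ⊆ {x : Vtx d n | occursAt d ρ p r n η x σ} :=
      fun x hx => occurs_of_ringExt η x σ hx
    have hne : ¬ ({x : Vtx d n | occursAt d ρ p r n η x σ}
        ⊆ {x : Vtx d n | occursAt d ρ p (r + 1) n (ringExt d ρ p r η) x σ}) := by
      intro h2
      exact hσ' (congrArg Set.ncard (Set.Subset.antisymm hsub h2))
    obtain ⟨x, hxS, hxnot⟩ := Set.not_subset.mp hne
    have hxS' : occursAt d ρ p r n η x σ := hxS
    simp only [Set.mem_setOf_eq, occursAt] at hxnot
    push_neg at hxnot
    obtain ⟨v', hv'⟩ := hxnot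
    by_cases hmem : v'.1 ∈ refBall d ρ p r
    · exfalso
      apply hv'
      have h1 := hxS' ⟨v'.1, hmem⟩
      rw [h1]
      show η ⟨v'.1, hmem⟩ = ringExt d ρ p r η v'
      unfold ringExt
      rw [dif_pos hmem]
    · have hring : ringExt d ρ p r η v' = false := by
        unfold ringExt
        rw [dif_neg hmem]
      rw [hring] at hv'
      have htrue : σ (x + fun i => ((v'.1 i : ZMod n))) = true := by
        cases hbb : σ (x + fun i => ((v'.1 i : ZMod n))) <;> simp_all
      refine Set.mem_iUnion₂.mpr ⟨(x, v'.1), ?_, ⟨hxS', htrue⟩⟩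
      rw [hI, Finset.mem_product]
      exact ⟨Finset.mem_univ x, hAnnfin.mem_toFinset.mpr ⟨v'.2, hmem⟩⟩
  have step2 : prob d ρ p n (a n) b N ≤ ∑ q ∈ I, prob d ρ p n (a n) b (F q) := by
    rw [prob_eq_sumW]
    have h1 : ∑ q ∈ I, prob d ρ p n (a n) b (F q)
        = (∑ q ∈ I, sumW d ρ p n (a n) b (F q)) / partZ d ρ p n (a n) b := by
      rw [Finset.sum_div]
      exact Finset.sum_congr rfl fun q _ => prob_eq_sumW d ρ p n (a n) b (F q)
    rw [h1]
    gcongr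
    · exact (partZ_pos d ρ p n (a n) b).le
    · exact le_trans (sumW_mono d ρ p n (a n) b hcov)
        (sumW_biUnion_le d ρ p n (a n) b I F)
  set K : ℝ := Real.exp ((2 * a n + Q) * ((k + 1 : ℕ) : ℝ)) with hK
  have step3 : ∀ q ∈ I, prob d ρ p n (a n) b (F q) ≤ K := by
    rintro ⟨x, v⟩ hq
    rw [hI, Finset.mem_product] at hq
    have hv' := hAnnfin.mem_toFinset.mp hq.2
    exact flip_bound η n hn (a n) b x v hv'.1 hv'.2
  have step4 : ∑ q ∈ I, prob d ρ p n (a n) b (F q) ≤ (I.card : ℝ) * K := by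
    calc ∑ q ∈ I, prob d ρ p n (a n) b (F q) ≤ ∑ _q ∈ I, K := Finset.sum_le_sum step3
      _ = (I.card : ℝ) * K := by rw [Finset.sum_const, nsmul_eq_mul]
  have hcardI : (I.card : ℝ) = (n : ℝ) ^ d * (Ann.card : ℝ) := by
    rw [hI, Finset.card_product, Finset.card_univ]
    have hv : Fintype.card (Vtx d n) = n ^ d := by
      rw [Fintype.card_fun, ZMod.card, Fintype.card_fin]
    rw [hv]
    push_cast
    ring
  -- compute K
  have hKval : K = (c * (n : ℝ) ^ e) ^ (k + 1) * Kb := by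
    rw [hK, add_mul, Real.exp_add, hKb, mul_comm (2 * a n), Real.exp_nat_mul,
      ha n hn0]
  have hrpow : ((n : ℝ) ^ e) ^ (k + 1) = (n : ℝ) ^ (e * ((k : ℝ) + 1)) := by
    rw [← Real.rpow_natCast ((n : ℝ) ^ e) (k + 1), ← Real.rpow_mul hnR.le]
    push_cast
    ring_nf
  have hnd : (n : ℝ) ^ d = (n : ℝ) ^ ((d : ℕ) : ℝ) := (Real.rpow_natCast _ d).symm
  have hexpo : ((d : ℕ) : ℝ) + e * ((k : ℝ) + 1) = e := by
    rw [he]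
    have hkne : (k : ℝ) ≠ 0 := by linarith
    field_simp
    ring
  have hcomb : (n : ℝ) ^ d * (n : ℝ) ^ (e * ((k : ℝ) + 1)) = (n : ℝ) ^ e := by
    rw [hnd, ← Real.rpow_add hnR, hexpo]
  have hKpos : 0 ≤ K := (Real.exp_pos _).le
  have total : (I.card : ℝ) * K ≤ ((Ann.card : ℝ) * Kb * c ^ (k + 1)) * (n : ℝ) ^ e := by
    rw [hcardI, hKval, mul_pow, hrpow]
    refine le_of_eq ?_
    calc (n : ℝ) ^ d * (Ann.card : ℝ) * (c ^ (k + 1) * (n : ℝ) ^ (e * ((k : ℝ) + 1)) * Kb)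
        = ((Ann.card : ℝ) * Kb * c ^ (k + 1)) *
          ((n : ℝ) ^ d * (n : ℝ) ^ (e * ((k : ℝ) + 1))) := by ring
      _ = ((Ann.card : ℝ) * Kb * c ^ (k + 1)) * (n : ℝ) ^ e := by rw [hcomb]
  have hne0 : 0 < (n : ℝ) ^ e := Real.rpow_pos_of_pos hnR e
  have hCcoef : (Ann.card : ℝ) * Kb * c ^ (k + 1) ≤ C := by rw [hC]; linarith
  calc dTV (lawOf d ρ p n (a n) b X) (lawOf d ρ p n (a n) b Y)
      ≤ prob d ρ p n (a n) b N := step1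
    _ ≤ ∑ q ∈ I, prob d ρ p n (a n) b (F q) := step2
    _ ≤ (I.card : ℝ) * K := step4
    _ ≤ ((Ann.card : ℝ) * Kb * c ^ (k + 1)) * (n : ℝ) ^ e := total
    _ ≤ C * (n : ℝ) ^ e := mul_le_mul_of_nonneg_right hCcoef hne0.le

end

end Ising
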